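/- For all integers k ≥ 1 and n, m ≥ 0, one has δᵏ ≠ 2·L_m·αⁿ (equivalently, the quantity δᵏ·(2·L_m)⁻¹·α^{−n} − 1 is nonzero). -/

import Mathlib

/-- The Lucas numbers: L₀ = 2, L₁ = 1, L_{n+2} = L_{n+1} + L_n. -/
def lucas : ℕ → ℕ
  | 0 => 2
  | 1 => 1
  | n + 2 => lucas (n + 1) + lucas n

/-- The golden ratio α = (1 + √5)/2. -/
noncomputable def alpha : ℝ := (1 + Real.sqrt 5) / 2

lemma lucas_pos (m : ℕ) : 1 ≤ lucas m := by
  induction m using Nat.twoStepInduction with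
  | zero => simp [lucas]
  | one => simp [lucas]
  | more n ih1 ih2 => rw [lucas]; omega

lemma lucas_eq_fib (n : ℕ) : (lucas (n + 1) : ℤ) = 2 * Nat.fib n + Nat.fib (n + 1) := by
  induction n using Nat.twoStepInduction with
  | zero => simp [lucas]
  | one => norm_num [lucas, Nat.fib]
  | more n ih1 ih2 =>
    have h1 : lucas (n + 3) = lucas (n + 2) + lucas (n + 1) := rfl
    have h2 : Nat.fib (n + 2) = Nat.fib n + Nat.fib (n + 1) := by
      rw [Nat.fib_add_two]
    have h3 : Nat.fib (n + 3) = Nat.fib (n + 1) + Nat.fib (n + 2) := by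
      rw [Nat.fib_add_two]
    rw [h1]
    push_cast [h2, h3]
    push_cast [h2] at ih2
    linarith

lemma fib_cassini (n : ℕ) :
    (Nat.fib (n + 1) : ℤ) ^ 2 - Nat.fib (n + 1) * Nat.fib n - (Nat.fib n : ℤ) ^ 2
      = (-1) ^ n := by
  induction n with
  | zero => simp
  | succ n ih =>
    have h2 : Nat.fib (n + 2) = Nat.fib n + Nat.fib (n + 1) := by
      rw [Nat.fib_add_two]
    push_cast [h2]
    linear_combination (-1 : ℤ) * ih

lemma lucas_fib (n : ℕ) :
    (lucas n : ℤ) ^ 2 - 5 * (Nat.fib n : ℤ) ^ 2 = 4 * (-1) ^ n := by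
  cases n with
  | zero => simp [lucas]
  | succ n =>
    have h := lucas_eq_fib n
    have h2 := fib_cassini n
    linear_combination ((lucas (n + 1) : ℤ) + 2 * (Nat.fib n : ℤ) + (Nat.fib (n + 1) : ℤ)) * h
      - 4 * h2

lemma alpha_pow (n : ℕ) :
    2 * alpha ^ n = (lucas n : ℝ) + (Nat.fib n : ℝ) * Real.sqrt 5 := by
  have h5 : Real.sqrt 5 * Real.sqrt 5 = 5 := Real.mul_self_sqrt (by norm_num)
  induction n using Nat.twoStepInduction with
  | zero => simp [lucas]
  | one =>
    simp only [alpha, lucas, Nat.fib_one, pow_one, Nat.cast_one]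
    ring
  | more n ih1 ih2 =>
    have halpha : alpha ^ (n + 2) = alpha ^ (n + 1) + alpha ^ n := by
      have : alpha ^ 2 = alpha + 1 := by
        rw [alpha]; field_simp; nlinarith [h5]
      calc alpha ^ (n + 2) = alpha ^ n * alpha ^ 2 := by ring
        _ = alpha ^ n * (alpha + 1) := by rw [this]
        _ = alpha ^ (n + 1) + alpha ^ n := by ring
    have hl : lucas (n + 2) = lucas (n + 1) + lucas n := rfl
    have hf : Nat.fib (n + 2) = Nat.fib n + Nat.fib (n + 1) := by
      rw [Nat.fib_add_two]
    rw [halpha, hl, hf]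
    push_cast
    linarith

lemma pow_rep (d x1 y1 : ℕ) (ε : ℤ)
    (hε : (x1 : ℤ) ^ 2 - (d : ℤ) * (y1 : ℤ) ^ 2 = ε)
    (hx1 : 1 ≤ x1) (hy1 : 1 ≤ y1) :
    ∀ k : ℕ, ∃ a b : ℕ,
      ((x1 : ℝ) + (y1 : ℝ) * Real.sqrt d) ^ k = (a : ℝ) + (b : ℝ) * Real.sqrt d ∧
      (a : ℤ) ^ 2 - (d : ℤ) * (b : ℤ) ^ 2 = ε ^ k ∧ 1 ≤ a ∧ (1 ≤ k → 1 ≤ b) := by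
  intro k
  induction k with
  | zero => exact ⟨1, 0, by simp, by simp, le_refl 1, by omega⟩
  | succ k ih =>
    obtain ⟨a, b, hrep, hnorm, ha, hb⟩ := ih
    refine ⟨a * x1 + b * y1 * d, a * y1 + b * x1, ?_, ?_, ?_, ?_⟩
    · have hdd : Real.sqrt d * Real.sqrt d = d :=
        Real.mul_self_sqrt (by positivity)
      rw [pow_succ, hrep]
      push_cast
      linear_combination ((b : ℝ) * (y1 : ℝ)) * hdd
    · push_cast
      linear_combination ((x1 : ℤ) ^ 2 - (d : ℤ) * (y1 : ℤ) ^ 2) * hnorm + ε ^ k * hε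
    · have h1 : 1 ≤ a * x1 := Nat.one_le_iff_ne_zero.mpr (Nat.mul_ne_zero (by omega) (by omega))
      omega
    · intro _
      have h1 : 1 ≤ a * y1 := Nat.one_le_iff_ne_zero.mpr (Nat.mul_ne_zero (by omega) (by omega))
      omega

theorem stmt_11
    (d x1 y1 : ℕ) (ε : ℤ) (δ η : ℝ) (X : ℕ → ℝ)
    (hd : 2 ≤ d) (hdsf : Squarefree d)
    (hx1 : 1 ≤ x1) (hy1 : 1 ≤ y1)
    (hε : (x1 : ℤ) ^ 2 - (d : ℤ) * (y1 : ℤ) ^ 2 = ε)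
    (hεpm : ε = 1 ∨ ε = -1)
    (hmin : ∀ x y : ℕ, 1 ≤ x → 1 ≤ y →
      ((x : ℤ) ^ 2 - (d : ℤ) * (y : ℤ) ^ 2 = 1 ∨
        (x : ℤ) ^ 2 - (d : ℤ) * (y : ℤ) ^ 2 = -1) → x1 ≤ x)
    (hδ : δ = (x1 : ℝ) + (y1 : ℝ) * Real.sqrt d)
    (hη : η = (x1 : ℝ) - (y1 : ℝ) * Real.sqrt d)
    (hX : ∀ k : ℕ, X k = (δ ^ k + η ^ k) / 2)
    (k n m : ℕ) (hk : 1 ≤ k) :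
    δ ^ k ≠ 2 * (lucas m : ℝ) * alpha ^ n := by
  intro heq
  obtain ⟨a, b, hrep, hnorm, ha, hb⟩ := pow_rep d x1 y1 ε hε hx1 hy1 k
  replace hb := hb hk
  -- δ^k = L_m L_n + L_m F_n √5
  have halpha := alpha_pow n
  have key : (a : ℝ) + (b : ℝ) * Real.sqrt d
      = ((lucas m * lucas n : ℕ) : ℝ) + ((lucas m * Nat.fib n : ℕ) : ℝ) * Real.sqrt 5 := by
    rw [← hrep, ← hδ, heq]
    push_cast
    linear_combination (lucas m : ℝ) * halpha
  -- irrationality of √d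
  have hdns : ¬ IsSquare d := by
    rintro ⟨r, hr⟩
    have hu := hdsf r (by rw [hr])
    rw [Nat.isUnit_iff] at hu
    subst hu
    omega
  have hirrd : Irrational (Real.sqrt d) := irrational_sqrt_natCast_iff.mpr hdns
  have hLm : 1 ≤ lucas m := lucas_pos m
  by_cases hfn : Nat.fib n = 0
  · -- RHS is a natural number, LHS is irrational
    rw [hfn] at key
    simp only [Nat.mul_zero, Nat.cast_zero, zero_mul, add_zero] at key
    exact ((hirrd.natCast_mul (by omega : b ≠ 0)).natCast_add a).ne_nat _ key
  · have hB : 1 ≤ lucas m * Nat.fib n := Nat.one_le_iff_ne_zero.mpr (by positivity)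
    set A := lucas m * lucas n with hA
    set B := lucas m * Nat.fib n with hBdef
    by_cases hd5 : d = 5
    · -- case d = 5 : compare coefficients
      subst hd5
      have h55 : ((5 : ℕ) : ℝ) = (5 : ℝ) := by norm_num
      rw [h55] at key hirrd
      have hirr5 : Irrational (Real.sqrt (5 : ℝ)) := hirrd
      have hbB : b = B := by
        by_contra hne
        have hz : ((b : ℤ) - (B : ℤ)) ≠ 0 := by
          intro h; apply hne; omega
        have : (((b : ℤ) - (B : ℤ) : ℤ) : ℝ) * Real.sqrt (5 : ℝ)
            = (((A : ℤ) - (a : ℤ) : ℤ) : ℝ) := by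
          push_cast
          linear_combination key
        exact (hirr5.intCast_mul hz).ne_int _ this
      have haA : a = A := by
        have : (a : ℝ) = (A : ℝ) := by
          rw [hbB] at key
          linarith [key]
        exact_mod_cast this
      -- norm contradiction
      have hNA : (A : ℤ) ^ 2 - 5 * (B : ℤ) ^ 2 = 4 * (lucas m : ℤ) ^ 2 * (-1) ^ n := by
        have := lucas_fib n
        rw [hA, hBdef]
        push_cast
        linear_combination ((lucas m : ℤ)) ^ 2 * this
      have heps : ε ^ k = 4 * (lucas m : ℤ) ^ 2 * (-1) ^ n := by
        rw [← hNA, ← haA, ← hbB]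
        rw [← hnorm]
        push_cast
        ring
      have h1 : |ε ^ k| = 1 := by
        rcases hεpm with h | h <;> subst h <;>
          simp [abs_pow]
      have h2 : |(4 : ℤ) * (lucas m : ℤ) ^ 2 * (-1) ^ n| = 4 * (lucas m : ℤ) ^ 2 := by
        rw [abs_mul, abs_pow, abs_neg, abs_one, one_pow, mul_one, abs_mul, abs_pow]
        simp
      rw [heps, h2] at h1
      have : (1 : ℤ) ≤ (lucas m : ℤ) := by exact_mod_cast hLm
      nlinarith
    · -- case d ≠ 5 : √(5d) is irrational
      have h5d_ns : ¬ IsSquare (5 * d) := by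
        rintro ⟨r, hr⟩
        have h5r : 5 ∣ r := by
          have : (5 : ℕ).Prime := by norm_num
          have h5rr : 5 ∣ r * r := ⟨d, hr.symm⟩
          exact (Nat.Prime.dvd_mul this).mp h5rr |>.elim id id
        obtain ⟨s, hs⟩ := h5r
        have h25 : 5 * d = 25 * (s * s) := by rw [hr, hs]; ring
        have hds : d = 5 * (s * s) := by omega
        have hu := hdsf s ⟨5, by omega⟩
        rw [Nat.isUnit_iff] at hu
        subst hu
        omega
      have hirr5d : Irrational (Real.sqrt ((5 * d : ℕ) : ℝ)) :=
        irrational_sqrt_natCast_iff.mpr h5d_ns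
      -- from key: b √d - B √5 = A - a, square it
      have hsq5 : Real.sqrt 5 * Real.sqrt 5 = 5 := Real.mul_self_sqrt (by norm_num)
      have hsqd : Real.sqrt d * Real.sqrt d = d := Real.mul_self_sqrt (by positivity)
      have hprod : Real.sqrt ((5 * d : ℕ) : ℝ) = Real.sqrt 5 * Real.sqrt (d : ℝ) := by
        push_cast
        rw [← Real.sqrt_mul (by norm_num : (0:ℝ) ≤ 5)]
      have hc : ((b : ℝ) * Real.sqrt d - (B : ℝ) * Real.sqrt 5)
          = (A : ℝ) - (a : ℝ) := by
        linarith [key]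
      have hc2 : ((b : ℝ) * Real.sqrt d - (B : ℝ) * Real.sqrt 5) ^ 2
          = ((A : ℝ) - (a : ℝ)) ^ 2 := by rw [hc]
      have hmain : ((2 * (b : ℤ) * (B : ℤ) : ℤ) : ℝ) * Real.sqrt ((5 * d : ℕ) : ℝ)
          = (((b : ℤ) ^ 2 * d + 5 * (B : ℤ) ^ 2 - ((A : ℤ) - (a : ℤ)) ^ 2 : ℤ) : ℝ) := by
        rw [hprod]
        push_cast
        linear_combination (-1 : ℝ) * hc2 + ((b : ℝ) ^ 2) * hsqd + ((B : ℝ) ^ 2) * hsq5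
      have hb' : (0 : ℤ) < (b : ℤ) := by exact_mod_cast hb
      have hB' : (0 : ℤ) < (B : ℤ) := by exact_mod_cast hB
      have hz : (2 * (b : ℤ) * (B : ℤ) : ℤ) ≠ 0 :=
        ne_of_gt (by nlinarith)
      exact (hirr5d.intCast_mul hz).ne_int _ hmain
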